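/- For every n ≥ 2 and every k, the number of permutations of length n that avoid the mesh pattern (12, {(0,1),(1,1),(1,2),(2,1)}) and have exactly k descents equals the number of permutations of length n−1 that have exactly k−1 descents. In particular, the number of permutations of length n avoiding this pattern is (n−1)! for all n ≥ 1. -/

import Mathlib

/-- 1-based position boundaries of an occurrence: `posOf x 0 = 0`,
`posOf x i = x_i` (1-based) for `1 ≤ i ≤ k`, and `posOf x i = n+1` for `i > k`. -/
def posOf {k n : ℕ} (x : Fin k → Fin n) (i : ℕ) : ℕ :=
  if h : 1 ≤ i ∧ i ≤ k then (x ⟨i - 1, by omega⟩ : ℕ) + 1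
  else if i = 0 then 0 else n + 1

/-- 1-based value boundaries of an occurrence: `valOf τ x π 0 = 0`,
`valOf τ x π j = y_j`, the `j`-th smallest of the values `π(x_1),…,π(x_k)`
(which equals `π(x_{τ⁻¹(j)})` for an occurrence of the classical pattern `τ`),
and `n+1` for `j > k`. -/
def valOf {k n : ℕ} (τ : Equiv.Perm (Fin k)) (x : Fin k → Fin n)
    (π : Equiv.Perm (Fin n)) (j : ℕ) : ℕ :=
  if h : 1 ≤ j ∧ j ≤ k then (π (x (τ.symm ⟨j - 1, by omega⟩)) : ℕ) + 1
  else if j = 0 then 0 else n + 1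

/-- `π` (a permutation of length `n`, 0-indexed via `Fin n`) contains the mesh
pattern `(τ, R)`, where boxes in `R` are given with 0-based coordinates in `[0,k]²`.
All positions/values are converted to 1-based via `+1`. -/
def MeshOccursIn {k n : ℕ} (τ : Equiv.Perm (Fin k)) (R : Set (ℕ × ℕ))
    (π : Equiv.Perm (Fin n)) : Prop :=
  ∃ x : Fin k → Fin n, StrictMono x ∧
    (∀ a b : Fin k, π (x a) < π (x b) ↔ τ a < τ b) ∧
    ∀ r ∈ R, ∀ z : Fin n,
      ¬ (posOf x r.1 < (z : ℕ) + 1 ∧ (z : ℕ) + 1 < posOf x (r.1 + 1) ∧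
         valOf τ x π r.2 < (π z : ℕ) + 1 ∧ (π z : ℕ) + 1 < valOf τ x π (r.2 + 1))

/-- `π` avoids the mesh pattern `(τ, R)`. -/
def MeshAvoids {k n : ℕ} (τ : Equiv.Perm (Fin k)) (R : Set (ℕ × ℕ))
    (π : Equiv.Perm (Fin n)) : Prop := ¬ MeshOccursIn τ R π

/-- The number of descents of `π`: indices `i` (1-based `1 ≤ i ≤ n-1`) with
`π(i) > π(i+1)`; counted here as pairs of adjacent positions. -/
def descents {n : ℕ} (π : Equiv.Perm (Fin n)) : ℕ :=
  (Finset.univ.filter fun p : Fin n × Fin n =>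
    (p.1 : ℕ) + 1 = (p.2 : ℕ) ∧ π p.2 < π p.1).card

namespace Stmt6

open Equiv Finset

/-- word values as an ℕ-indexed function -/
def vv {m : ℕ} (π : Equiv.Perm (Fin m)) (i : ℕ) : ℕ :=
  if h : i < m then (π ⟨i, h⟩ : ℕ) else 0

lemma descents_eq_sum {m : ℕ} (π : Equiv.Perm (Fin m)) :
    descents π = ∑ i ∈ Finset.range (m - 1), if vv π (i + 1) < vv π i then 1 else 0 := by
  classical
  rw [descents, ← Finset.card_filter]
  apply Finset.card_bij (fun p _ => ((p.1 : Fin m) : ℕ))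
  · rintro ⟨a, b⟩ hp
    simp only [Finset.mem_filter, Finset.mem_univ, true_and] at hp ⊢
    obtain ⟨hab, hlt⟩ := hp
    have hb := b.isLt
    refine ⟨Finset.mem_range.2 (by omega), ?_⟩
    have hbeq : b = (⟨(a : ℕ) + 1, by omega⟩ : Fin m) := Fin.ext hab.symm
    have h1 : vv π ((a : ℕ) + 1) = (π b : ℕ) := by
      simp only [vv]
      rw [dif_pos (by omega : (a:ℕ)+1 < m)]
      exact congrArg _ (congrArg _ hbeq.symm)
    have h2 : vv π (a : ℕ) = (π a : ℕ) := by
      simp only [vv]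
      rw [dif_pos a.isLt]
    rw [h1, h2]; exact Fin.lt_def.mp hlt
  · rintro ⟨a, b⟩ hp ⟨a', b'⟩ hp' h
    simp only [Finset.mem_filter, Finset.mem_univ, true_and] at hp hp'
    have ha : a = a' := Fin.ext h
    subst ha
    have hb : b = b' := Fin.ext (by omega)
    subst hb; rfl
  · intro i hi
    simp only [Finset.mem_filter, Finset.mem_range] at hi
    obtain ⟨hi1, hi2⟩ := hi
    simp only [vv] at hi2
    rw [dif_pos (by omega : i+1 < m), dif_pos (by omega : i < m)] at hi2
    exact ⟨(⟨i, by omega⟩, ⟨i+1, by omega⟩),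
      Finset.mem_filter.mpr ⟨Finset.mem_univ _, rfl, Fin.lt_def.mpr hi2⟩, rfl⟩

lemma descents_le {m : ℕ} (π : Equiv.Perm (Fin m)) : descents π ≤ m - 1 := by
  rw [descents_eq_sum]
  calc ∑ i ∈ Finset.range (m-1), (if vv π (i+1) < vv π i then 1 else 0)
      ≤ ∑ _i ∈ Finset.range (m-1), 1 := Finset.sum_le_sum (by intro i _; split <;> omega)
    _ = m - 1 := by simp

variable {n : ℕ}

/-- insert a new minimum value at position `p` -/
def ins (σ : Equiv.Perm (Fin n)) (p : Fin (n+1)) : Equiv.Perm (Fin (n+1)) :=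
  ((finSuccEquiv' p).trans σ.optionCongr).trans (finSuccEquiv' 0).symm

lemma ins_self (σ : Equiv.Perm (Fin n)) (p : Fin (n+1)) : ins σ p p = 0 := by
  simp [ins, finSuccEquiv'_at]

lemma ins_succAbove (σ : Equiv.Perm (Fin n)) (p : Fin (n+1)) (j : Fin n) :
    ins σ p (p.succAbove j) = (σ j).succ := by
  simp [ins, finSuccEquiv'_succAbove, finSuccEquiv'_symm_some]

lemma succAbove_val {N : ℕ} (p : Fin (N+1)) (j : Fin N) :
    ((p.succAbove j : Fin (N+1)) : ℕ) = if (j : ℕ) < (p : ℕ) then (j : ℕ) else (j : ℕ) + 1 := by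
  rcases lt_or_ge (Fin.castSucc j) p with h | h
  · rw [Fin.succAbove_of_castSucc_lt _ _ h, if_pos]
    · simp
    · simpa [Fin.lt_def] using h
  · rw [Fin.succAbove_of_le_castSucc _ _ h, if_neg]
    · simp
    · simp only [Fin.le_def, Fin.coe_castSucc] at h; omega

lemma vv_ins (σ : Equiv.Perm (Fin n)) (p : Fin (n+1)) (i : ℕ) :
    vv (ins σ p) i = if i < (p : ℕ) then vv σ i + 1
      else if i = (p : ℕ) then 0
      else if i < n + 1 then vv σ (i-1) + 1 else 0 := by
  have hp := p.isLt
  by_cases hi : i < n + 1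
  · rcases lt_trichotomy i (p : ℕ) with h | h | h
    · -- i < p : position is succAbove of ⟨i, _⟩
      have hin : i < n := by omega
      have he : (⟨i, hi⟩ : Fin (n+1)) = p.succAbove ⟨i, hin⟩ := by
        apply Fin.ext
        rw [succAbove_val, if_pos h]
      rw [if_pos h]
      simp only [vv, dif_pos hi, dif_pos hin, he, ins_succAbove, Fin.val_succ]
    · rw [if_neg (by omega), if_pos h]
      have he : (⟨i, hi⟩ : Fin (n+1)) = p := Fin.ext h
      simp only [vv, dif_pos hi, he, ins_self, Fin.val_zero]
    · rw [if_neg (by omega), if_neg (by omega), if_pos hi]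
      have hin : i - 1 < n := by omega
      have he : (⟨i, hi⟩ : Fin (n+1)) = p.succAbove ⟨i-1, hin⟩ := by
        apply Fin.ext
        rw [succAbove_val, if_neg (by simp; omega)]
        simp; omega
      simp only [vv, dif_pos hi, dif_pos hin, he, ins_succAbove, Fin.val_succ]
  · rw [if_neg (by omega), if_neg (by omega), if_neg hi]
    simp only [vv, dif_neg hi]

/-- descent-change type of inserting a new minimum at slot `i` (ℕ-indexed) -/
def typ {m : ℕ} (σ : Equiv.Perm (Fin m)) (i : ℕ) : ℕ :=
  if i = 0 then 0 else if i < m then (if vv σ i < vv σ (i-1) then 0 else 1) else 1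

lemma typ_le_one {m : ℕ} (σ : Equiv.Perm (Fin m)) (i : ℕ) : typ σ i ≤ 1 := by
  unfold typ; split_ifs <;> omega

lemma descents_ins (σ : Equiv.Perm (Fin n)) (p : Fin (n+1)) :
    descents (ins σ p) = descents σ + typ σ (p : ℕ) := by
  have hp := p.isLt
  set P := (p : ℕ) with hP
  set c : ℕ → ℕ := fun i => if vv (ins σ p) (i+1) < vv (ins σ p) i then 1 else 0 with hc
  set d : ℕ → ℕ := fun i => if vv σ (i+1) < vv σ i then 1 else 0 with hd
  have hcd_lt : ∀ i, i + 1 < P → c i = d i := by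
    intro i h
    simp only [hc, hd, vv_ins, ← hP, if_pos (show i < P by omega), if_pos h]
    split_ifs with h1 h2 h2 <;> omega
  have hc_at : 1 ≤ P → c (P - 1) = 1 := by
    intro h
    simp only [hc, vv_ins, ← hP, show P - 1 + 1 = P by omega, if_neg (lt_irrefl P), if_pos rfl,
      if_pos (show P - 1 < P by omega)]
    simp
  have hc_P : P < n → c P = 0 := by
    intro h
    simp only [hc, vv_ins, ← hP, if_neg (show ¬ P + 1 < P by omega), if_neg (show P + 1 ≠ P by omega),
      if_pos (show P + 1 < n + 1 by omega), if_neg (lt_irrefl P), if_pos rfl]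
    simp
  have hc_gt : ∀ i, P < i → i < n → c i = d (i-1) := by
    intro i h1 h2
    simp only [hc, hd, vv_ins, ← hP, if_neg (show ¬ i + 1 < P by omega), if_neg (show i + 1 ≠ P by omega),
      if_pos (show i + 1 < n + 1 by omega), if_neg (show ¬ i < P by omega),
      if_neg (show i ≠ P by omega), if_pos (show i < n + 1 by omega),
      show i + 1 - 1 = i - 1 + 1 by omega]
    split_ifs with h3 h4 h4 <;> omega
  have hL : descents (ins σ p) = ∑ i ∈ Finset.range n, c i := by
    rw [descents_eq_sum (ins σ p)]
    simp only [Nat.add_sub_cancel]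
    rfl
  have hR : descents σ = ∑ i ∈ Finset.range (n-1), d i := descents_eq_sum σ
  rw [hL, hR]
  clear_value P
  by_cases h0 : P = 0
  · have ht : typ σ P = 0 := by simp [typ, h0]
    rw [ht, Nat.add_zero]
    subst h0
    rcases n with _ | n'
    · simp
    · rw [Finset.sum_range_succ']
      rw [hc_P (by omega)]
      have hcong : ∑ k ∈ Finset.range n', c (k+1) = ∑ k ∈ Finset.range n', d k :=
        Finset.sum_congr rfl (fun i hi => by
          rw [Finset.mem_range] at hi
          rw [hc_gt (i+1) (by omega) (by omega), show i + 1 - 1 = i by omega])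
      rw [hcong]
      simp only [Nat.add_sub_cancel, Nat.add_zero]
  · by_cases hn : P = n
    · have ht : typ σ P = 1 := by
        subst hn; simp [typ, h0]
      rw [ht]
      have e1 : ∑ i ∈ Finset.range n, c i = (∑ i ∈ Finset.range (n-1), c i) + c (n-1) := by
        conv_lhs => rw [show n = (n-1)+1 by omega]
        rw [Finset.sum_range_succ]
      have e2 : c (n-1) = 1 := by
        rw [show n-1 = P-1 by omega]; exact hc_at (by omega)
      have e3 : ∑ i ∈ Finset.range (n-1), c i = ∑ i ∈ Finset.range (n-1), d i :=
        Finset.sum_congr rfl (fun i hi => by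
          rw [Finset.mem_range] at hi
          exact hcd_lt i (by omega))
      rw [e1, e2, e3]
    · -- 0 < P < n
      have hP1 : 1 ≤ P := by omega
      have hPn : P < n := by omega
      have split1 : ∑ i ∈ Finset.range n, c i =
          (∑ i ∈ Finset.Ico 0 (P-1), c i) + (∑ i ∈ Finset.Ico (P-1) (P+1), c i)
          + (∑ i ∈ Finset.Ico (P+1) n, c i) := by
        rw [Finset.range_eq_Ico,
          ← Finset.sum_Ico_consecutive c (by omega : 0 ≤ P-1) (by omega : P-1 ≤ n),
          ← Finset.sum_Ico_consecutive c (by omega : P-1 ≤ P+1) (by omega : P+1 ≤ n)]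
        ring
      have split2 : ∑ i ∈ Finset.range (n-1), d i =
          (∑ i ∈ Finset.Ico 0 (P-1), d i) + d (P-1) + (∑ i ∈ Finset.Ico P (n-1), d i) := by
        rw [Finset.range_eq_Ico,
          ← Finset.sum_Ico_consecutive d (by omega : 0 ≤ P-1) (by omega : P-1 ≤ n-1),
          ← Finset.sum_Ico_consecutive d (by omega : P-1 ≤ P) (by omega : P ≤ n-1),
          show Finset.Ico (P-1) P = {P-1} by ext a; simp [Finset.mem_Ico]; omega,
          Finset.sum_singleton]
        ring
      have mid : ∑ i ∈ Finset.Ico (P-1) (P+1), c i = 1 := by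
        rw [show Finset.Ico (P-1) (P+1) = {P-1, P} by ext a; simp [Finset.mem_Ico]; omega]
        rw [Finset.sum_insert (by simp; omega), Finset.sum_singleton]
        rw [hc_at hP1, hc_P hPn]
      have first : ∑ i ∈ Finset.Ico 0 (P-1), c i = ∑ i ∈ Finset.Ico 0 (P-1), d i :=
        Finset.sum_congr rfl (fun i hi => by
          rw [Finset.mem_Ico] at hi
          exact hcd_lt i (by omega))
      have third : ∑ i ∈ Finset.Ico (P+1) n, c i = ∑ i ∈ Finset.Ico P (n-1), d i := by
        rw [Finset.sum_Ico_eq_sum_range, Finset.sum_Ico_eq_sum_range,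
          show n - (P+1) = n - 1 - P by omega]
        exact Finset.sum_congr rfl (fun i hi => by
          rw [Finset.mem_range] at hi
          rw [hc_gt (P+1+i) (by omega) (by omega), show P+1+i-1 = P+i by omega])
      have ht : typ σ P = 1 - d (P-1) := by
        simp only [typ, if_neg h0, if_pos hPn, hd, show P - 1 + 1 = P by omega]
        split_ifs <;> rfl
      have hdle : d (P-1) ≤ 1 := by simp only [hd]; split_ifs <;> omega
      rw [split1, split2, mid, first, third, ht]
      omega

lemma card_typ0 (σ : Equiv.Perm (Fin n)) :
    ((Finset.univ : Finset (Fin (n+1))).filter fun p : Fin (n+1) => typ σ (p : ℕ) = 0).card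
      = descents σ + 1 := by
  classical
  rw [Finset.card_filter]
  rw [Fin.sum_univ_eq_sum_range (fun i => if typ σ i = 0 then 1 else 0) (n+1)]
  rcases n with _ | n'
  · rw [descents_eq_sum]
    simp [typ]
  · rw [Finset.sum_range_succ, Finset.sum_range_succ']
    have h1 : (if typ σ (n'+1) = 0 then 1 else 0) = 0 := by simp [typ]
    have h2 : (if typ σ 0 = 0 then 1 else 0) = 1 := by simp [typ]
    have h3 : ∀ k ∈ Finset.range n',
        (if typ σ (k+1) = 0 then 1 else 0) = if vv σ (k+1) < vv σ k then 1 else 0 := by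
      intro k hk
      rw [Finset.mem_range] at hk
      have ht : typ σ (k+1) = if vv σ (k+1) < vv σ k then 0 else 1 := by
        simp only [typ, if_neg (show k+1 ≠ 0 by omega), if_pos (show k+1 < n'+1 by omega),
          Nat.add_sub_cancel]
      rw [ht]
      split_ifs <;> simp_all
    rw [h1, h2, Finset.sum_congr rfl h3, descents_eq_sum]
    simp only [Nat.add_sub_cancel, Nat.add_zero]

lemma card_typ1 (σ : Equiv.Perm (Fin n)) :
    ((Finset.univ : Finset (Fin (n+1))).filter fun p : Fin (n+1) => typ σ (p : ℕ) = 1).card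
      = n - descents σ := by
  classical
  have htot := Finset.card_filter_add_card_filter_not
    (s := (Finset.univ : Finset (Fin (n+1)))) (p := fun p : Fin (n+1) => typ σ (p : ℕ) = 0)
  have hcongr : ((Finset.univ : Finset (Fin (n+1))).filter fun p : Fin (n+1) => ¬ typ σ (p : ℕ) = 0)
      = (Finset.univ : Finset (Fin (n+1))).filter fun p : Fin (n+1) => typ σ (p : ℕ) = 1 := by
    apply Finset.filter_congr
    intro p _
    have := typ_le_one σ (p : ℕ)
    constructor
    · intro h; omega
    · intro h; omega
  rw [hcongr, card_typ0] at htot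
  have hbound : descents σ ≤ n - 1 := descents_le σ
  have hcard : (Finset.univ : Finset (Fin (n+1))).card = n + 1 := by simp
  rw [hcard] at htot
  rcases n with _ | n'
  · have h0 : descents σ = 0 := by omega
    omega
  · omega

def bad (σ : Equiv.Perm (Fin (n+1))) : Fin (n+2) := (σ⁻¹ 0).castSucc

lemma typ_bad (σ : Equiv.Perm (Fin (n+1))) : typ σ ((bad σ : Fin (n+2)) : ℕ) = 0 := by
  have hval : ((bad σ : Fin (n+2)) : ℕ) = ((σ⁻¹ 0 : Fin (n+1)) : ℕ) := rfl
  rw [hval]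
  by_cases h0 : ((σ⁻¹ 0 : Fin (n+1)) : ℕ) = 0
  · rw [h0]; simp [typ]
  · have hlt : ((σ⁻¹ 0 : Fin (n+1)) : ℕ) < n + 1 := (σ⁻¹ 0).isLt
    have hv1 : vv σ ((σ⁻¹ 0 : Fin (n+1)) : ℕ) = 0 := by
      simp only [vv, dif_pos hlt, Fin.eta]
      simp
    have hv2 : 0 < vv σ (((σ⁻¹ 0 : Fin (n+1)) : ℕ) - 1) := by
      simp only [vv, dif_pos (show ((σ⁻¹ 0 : Fin (n+1)) : ℕ) - 1 < n + 1 by omega)]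
      by_contra hz
      have hz0 : σ ⟨((σ⁻¹ 0 : Fin (n+1)) : ℕ) - 1, by omega⟩ = 0 := Fin.ext (by
        simp only [Fin.val_zero]
        omega)
      have h2 : (⟨((σ⁻¹ 0 : Fin (n+1)) : ℕ) - 1, by omega⟩ : Fin (n+1)) = σ⁻¹ 0 := by
        exact σ.injective (hz0.trans (σ.apply_symm_apply 0).symm)
      have h3 := congrArg Fin.val h2
      simp only [Fin.val_mk] at h3
      omega
    simp only [typ, if_neg h0, if_pos hlt, hv1, if_pos hv2]

/-- the avoidance characterization -/
def Chara {m : ℕ} (π : Equiv.Perm (Fin m)) : Prop :=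
  ∀ x0 x1 : Fin m, x0 < x1 → (π x1 : ℕ) = (π x0 : ℕ) + 1 →
    ∃ z : Fin m, x0 < z ∧ z < x1 ∧ π x1 < π z

lemma chara_ins_iff (σ : Equiv.Perm (Fin (n+1))) (p : Fin (n+2)) :
    Chara (ins σ p) ↔ Chara σ ∧ p ≠ bad σ := by
  constructor
  · intro h
    constructor
    · intro j0 j1 hlt hval
      have hx : p.succAbove j0 < p.succAbove j1 := Fin.succAbove_lt_succAbove_iff.mpr hlt
      have hv : ((ins σ p) (p.succAbove j1) : ℕ) = ((ins σ p) (p.succAbove j0) : ℕ) + 1 := by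
        rw [ins_succAbove, ins_succAbove, Fin.val_succ, Fin.val_succ, hval]
      obtain ⟨z, hz0, hz1, hgt⟩ := h _ _ hx hv
      have hzp : z ≠ p := by
        intro hzp
        rw [hzp, ins_self] at hgt
        exact absurd hgt (by
          rw [ins_succAbove]
          intro hcon
          rw [Fin.lt_def] at hcon
          simp at hcon)
      obtain ⟨w, rfl⟩ := Fin.exists_succAbove_eq hzp
      refine ⟨w, Fin.succAbove_lt_succAbove_iff.mp hz0, Fin.succAbove_lt_succAbove_iff.mp hz1, ?_⟩
      rw [ins_succAbove, ins_succAbove] at hgt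
      exact Fin.succ_lt_succ_iff.mp hgt
    · intro hpb
      set m : Fin (n+1) := σ⁻¹ 0 with hm
      have hpb' : p = m.castSucc := hpb
      have hx1 : p.succAbove m = m.succ :=
        Fin.succAbove_of_le_castSucc _ _ (le_of_eq hpb')
      have hlt : p < p.succAbove m := by
        rw [hx1, Fin.lt_def, hpb']
        simp
      have hval : ((ins σ p) (p.succAbove m) : ℕ) = ((ins σ p) p : ℕ) + 1 := by
        rw [ins_succAbove, ins_self, Fin.val_succ, hm]
        simp
      obtain ⟨z, hz0, hz1, _⟩ := h _ _ hlt hval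
      rw [Fin.lt_def] at hz0 hz1
      rw [hx1, Fin.val_succ] at hz1
      rw [hpb'] at hz0
      simp only [Fin.coe_castSucc] at hz0
      omega
  · rintro ⟨hσ, hpb⟩
    intro x0 x1 hlt hval
    by_cases h0 : x0 = p
    · subst h0
      set m : Fin (n+1) := σ⁻¹ 0 with hm
      have hv0 : ((ins σ x0) x0 : ℕ) = 0 := by rw [ins_self]; rfl
      have hv1 : ((ins σ x0) x1 : ℕ) = 1 := by omega
      have hx1 : x1 = x0.succAbove m := by
        apply (ins σ x0).injective
        apply Fin.ext
        rw [ins_succAbove, Fin.val_succ, hm, hv1]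
        simp
      have hple : x0 ≤ m.castSucc := by
        rcases lt_or_ge m.castSucc x0 with hc | hc
        · exfalso
          rw [hx1, Fin.succAbove_of_castSucc_lt _ _ hc] at hlt
          exact absurd hlt (not_lt.mpr (le_of_lt hc))
        · exact hc
      have hpm : (x0 : ℕ) < (m : ℕ) := by
        rw [Fin.le_def, Fin.coe_castSucc] at hple
        have hne : (x0 : ℕ) ≠ (m : ℕ) := fun hcc => hpb (Fin.ext hcc)
        omega
      have hx1v : (x1 : ℕ) = (m : ℕ) + 1 := by
        rw [hx1, Fin.succAbove_of_le_castSucc _ _ hple, Fin.val_succ]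
      have hmlt := m.isLt
      set z : Fin (n+2) := ⟨(x0 : ℕ) + 1, by omega⟩ with hz
      have hzv : (z : ℕ) = (x0 : ℕ) + 1 := rfl
      have hzp : z ≠ x0 := by
        intro hcc
        have := congrArg Fin.val hcc
        rw [hzv] at this
        omega
      obtain ⟨w, hw⟩ := Fin.exists_succAbove_eq hzp
      have hwm : w ≠ m := by
        intro hcon
        have hxz : x1 = z := by rw [hx1, ← hw, hcon]
        have hval2 : (x1 : ℕ) = (x0 : ℕ) + 1 := by rw [hxz]
        omega
      have hσw : (σ w : ℕ) ≠ 0 := by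
        intro hcon
        apply hwm
        have : σ w = σ m := by
          apply Fin.ext
          rw [hm]
          simp [hcon]
        exact σ.injective this
      refine ⟨z, ?_, ?_, ?_⟩
      · rw [Fin.lt_def, hzv]; omega
      · rw [Fin.lt_def, hzv, hx1v]; omega
      · rw [← hw, ins_succAbove, Fin.lt_def, Fin.val_succ]
        omega
    · by_cases h1 : x1 = p
      · exfalso
        rw [h1, ins_self] at hval
        simp at hval
      · obtain ⟨j0, rfl⟩ := Fin.exists_succAbove_eq h0
        obtain ⟨j1, rfl⟩ := Fin.exists_succAbove_eq h1
        have hj : j0 < j1 := Fin.succAbove_lt_succAbove_iff.mp hlt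
        have hv : (σ j1 : ℕ) = (σ j0 : ℕ) + 1 := by
          rw [ins_succAbove, ins_succAbove, Fin.val_succ, Fin.val_succ] at hval
          omega
        obtain ⟨w, hw0, hw1, hgt⟩ := hσ j0 j1 hj hv
        refine ⟨p.succAbove w, Fin.succAbove_lt_succAbove_iff.mpr hw0,
          Fin.succAbove_lt_succAbove_iff.mpr hw1, ?_⟩
        rw [ins_succAbove, ins_succAbove]
        exact Fin.succ_lt_succ_iff.mpr hgt

lemma ins_bijective :
    Function.Bijective (fun sp : Equiv.Perm (Fin n) × Fin (n+1) => ins sp.1 sp.2) := by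
  constructor
  · rintro ⟨σ, p⟩ ⟨σ', p'⟩ h
    simp only at h
    have hp : p = p' := by
      have h1 : ins σ' p' p = 0 := by rw [← h]; exact ins_self σ p
      have h2 : ins σ' p' p' = 0 := ins_self σ' p'
      exact (ins σ' p').injective (h1.trans h2.symm)
    subst hp
    have hσ : σ = σ' := by
      apply Equiv.ext; intro j
      exact Fin.succ_injective _
        (by rw [← ins_succAbove σ p j, ← ins_succAbove σ' p j, h])
    rw [hσ]
  · intro π
    have hne : ∀ j : Fin n, π ((π⁻¹ 0 : Fin (n+1)).succAbove j) ≠ 0 := by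
      intro j hcon
      exact Fin.succAbove_ne (π⁻¹ 0) j (π.injective (hcon.trans (π.apply_symm_apply 0).symm))
    have hginj : Function.Injective
        (fun j : Fin n => (π ((π⁻¹ 0 : Fin (n+1)).succAbove j)).pred (hne j)) := by
      intro a b hab
      have h2 : π ((π⁻¹ 0 : Fin (n+1)).succAbove a) = π ((π⁻¹ 0 : Fin (n+1)).succAbove b) := by
        have h3 := congrArg Fin.succ hab
        rwa [Fin.succ_pred, Fin.succ_pred] at h3
      exact Fin.succAbove_right_injective (π.injective h2)
    refine ⟨⟨Equiv.ofBijective _ (Finite.injective_iff_bijective.mp hginj), π⁻¹ 0⟩, ?_⟩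
    apply Equiv.ext
    intro i
    by_cases hip : i = π⁻¹ 0
    · subst hip
      rw [ins_self]
      exact (π.apply_symm_apply 0).symm
    · obtain ⟨j, rfl⟩ := Fin.exists_succAbove_eq hip
      rw [ins_succAbove, Equiv.ofBijective_apply, Fin.succ_pred]

noncomputable def insEquiv : Equiv.Perm (Fin n) × Fin (n+1) ≃ Equiv.Perm (Fin (n+1)) :=
  Equiv.ofBijective _ ins_bijective

lemma insEquiv_apply (sp : Equiv.Perm (Fin n) × Fin (n+1)) :
    insEquiv sp = ins sp.1 sp.2 := rfl

section MeshChar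

variable {m : ℕ}

lemma posOf_zero (x : Fin 2 → Fin m) : posOf x 0 = 0 := by simp [posOf]

lemma posOf_one (x : Fin 2 → Fin m) : posOf x 1 = (x 0 : ℕ) + 1 := by
  rw [posOf, dif_pos (by omega : 1 ≤ 1 ∧ 1 ≤ 2)]
  exact congrArg (fun t => (x t : ℕ) + 1) (by decide)

lemma posOf_two (x : Fin 2 → Fin m) : posOf x 2 = (x 1 : ℕ) + 1 := by
  rw [posOf, dif_pos (by omega : 1 ≤ 2 ∧ 2 ≤ 2)]
  exact congrArg (fun t => (x t : ℕ) + 1) (by decide)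

lemma posOf_three (x : Fin 2 → Fin m) : posOf x 3 = m + 1 := by
  rw [posOf, dif_neg (by omega)]
  norm_num

lemma valOf_one (x : Fin 2 → Fin m) (π : Equiv.Perm (Fin m)) :
    valOf (1 : Equiv.Perm (Fin 2)) x π 1 = (π (x 0) : ℕ) + 1 := by
  rw [valOf, dif_pos (by omega : 1 ≤ 1 ∧ 1 ≤ 2)]
  exact congrArg (fun t => (π (x t) : ℕ) + 1) (by decide)

lemma valOf_two (x : Fin 2 → Fin m) (π : Equiv.Perm (Fin m)) :
    valOf (1 : Equiv.Perm (Fin 2)) x π 2 = (π (x 1) : ℕ) + 1 := by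
  rw [valOf, dif_pos (by omega : 1 ≤ 2 ∧ 2 ≤ 2)]
  exact congrArg (fun t => (π (x t) : ℕ) + 1) (by decide)

lemma valOf_three (x : Fin 2 → Fin m) (π : Equiv.Perm (Fin m)) :
    valOf (1 : Equiv.Perm (Fin 2)) x π 3 = m + 1 := by
  rw [valOf, dif_neg (by omega)]
  norm_num

lemma meshAvoids_iff (π : Equiv.Perm (Fin m)) :
    MeshAvoids (1 : Equiv.Perm (Fin 2)) {(0,1),(1,1),(1,2),(2,1)} π ↔ Chara π := by
  rw [MeshAvoids]
  have hocc : MeshOccursIn (1 : Equiv.Perm (Fin 2)) {(0,1),(1,1),(1,2),(2,1)} π ↔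
      ∃ x0 x1 : Fin m, x0 < x1 ∧ (π x1 : ℕ) = (π x0 : ℕ) + 1 ∧
        ∀ z : Fin m, x0 < z → z < x1 → ¬ (π x1 < π z) := by
    constructor
    · rintro ⟨x, hmono, hiff, hbox⟩
      have h01 : x 0 < x 1 := hmono (by decide : (0 : Fin 2) < 1)
      have hπ01 : π (x 0) < π (x 1) := (hiff 0 1).mpr (by decide)
      have hπv : (π (x 0) : ℕ) < (π (x 1) : ℕ) := Fin.lt_def.mp hπ01
      have hval : (π (x 1) : ℕ) = (π (x 0) : ℕ) + 1 := by
        by_contra hne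
        have hlt2 : (π (x 0) : ℕ) + 1 < (π (x 1) : ℕ) := by omega
        have hy : (π (x 0) : ℕ) + 1 < m := lt_trans hlt2 (π (x 1)).isLt
        set y : Fin m := ⟨(π (x 0) : ℕ) + 1, by omega⟩ with hyd
        set z : Fin m := π.symm y with hzd
        have hπz : π z = y := π.apply_symm_apply y
        have hπzv : (π z : ℕ) = (π (x 0) : ℕ) + 1 := by rw [hπz]
        rcases lt_trichotomy z (x 0) with hzx | hzx | hzx
        · exact hbox (0,1) (by simp) z
            ⟨by rw [posOf_zero]; omega,
             by rw [posOf_one]; have := Fin.lt_def.mp hzx; omega,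
             by rw [valOf_one]; omega,
             by rw [valOf_two]; omega⟩
        · rw [hzx] at hπzv; omega
        · rcases lt_trichotomy z (x 1) with hzx1 | hzx1 | hzx1
          · exact hbox (1,1) (by simp) z
              ⟨by rw [posOf_one]; have := Fin.lt_def.mp hzx; omega,
               by rw [posOf_two]; have := Fin.lt_def.mp hzx1; omega,
               by rw [valOf_one]; omega,
               by rw [valOf_two]; omega⟩
          · rw [hzx1] at hπzv; omega
          · exact hbox (2,1) (by simp) z
              ⟨by rw [posOf_two]; have := Fin.lt_def.mp hzx1; omega,
               by rw [posOf_three]; have := z.isLt; omega,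
               by rw [valOf_one]; omega,
               by rw [valOf_two]; omega⟩
      refine ⟨x 0, x 1, h01, hval, ?_⟩
      intro z hz0 hz1 hgt
      exact hbox (1,2) (by simp) z
        ⟨by rw [posOf_one]; have := Fin.lt_def.mp hz0; omega,
         by rw [posOf_two]; have := Fin.lt_def.mp hz1; omega,
         by rw [valOf_two]; have := Fin.lt_def.mp hgt; omega,
         by rw [valOf_three]; have := (π z).isLt; omega⟩
    · rintro ⟨x0, x1, hlt, hval, hnz⟩
      have hπ : π x0 < π x1 := Fin.lt_def.mpr (by omega)
      refine ⟨![x0, x1], ?_, ?_, ?_⟩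
      · intro a b hab
        fin_cases a <;> fin_cases b
        · exact absurd hab (by decide)
        · simpa using hlt
        · exact absurd hab (by decide)
        · exact absurd hab (by decide)
      · intro a b
        simp only [Equiv.Perm.coe_one, id_eq]
        fin_cases a <;> fin_cases b
        · simpa using (lt_irrefl (π x0))
        · simpa using hπ
        · simp only [Matrix.cons_val_one, Matrix.head_cons, Matrix.cons_val_zero]
          exact ⟨fun h => absurd h (not_lt.mpr hπ.le), fun h => absurd h (by decide)⟩
        · simpa using (lt_irrefl (π x1))
      · intro r hr z
        simp only [Set.mem_insert_iff, Set.mem_singleton_iff] at hr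
        rcases hr with rfl | rfl | rfl | rfl
        · rintro ⟨h1, h2, h3, h4⟩
          have e3 : valOf (1 : Equiv.Perm (Fin 2)) ![x0, x1] π (((0,1) : ℕ × ℕ).2)
              = (π x0 : ℕ) + 1 := valOf_one _ _
          have e4 : valOf (1 : Equiv.Perm (Fin 2)) ![x0, x1] π (((0,1) : ℕ × ℕ).2 + 1)
              = (π x1 : ℕ) + 1 := valOf_two _ _
          rw [e3] at h3
          rw [e4] at h4
          omega
        · rintro ⟨h1, h2, h3, h4⟩
          have e3 : valOf (1 : Equiv.Perm (Fin 2)) ![x0, x1] π (((1,1) : ℕ × ℕ).2)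
              = (π x0 : ℕ) + 1 := valOf_one _ _
          have e4 : valOf (1 : Equiv.Perm (Fin 2)) ![x0, x1] π (((1,1) : ℕ × ℕ).2 + 1)
              = (π x1 : ℕ) + 1 := valOf_two _ _
          rw [e3] at h3
          rw [e4] at h4
          omega
        · rintro ⟨h1, h2, h3, h4⟩
          have e1 : posOf (![x0, x1] : Fin 2 → Fin m) (((1,2) : ℕ × ℕ).1)
              = (x0 : ℕ) + 1 := posOf_one _
          have e2 : posOf (![x0, x1] : Fin 2 → Fin m) (((1,2) : ℕ × ℕ).1 + 1)
              = (x1 : ℕ) + 1 := posOf_two _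
          have e3 : valOf (1 : Equiv.Perm (Fin 2)) ![x0, x1] π (((1,2) : ℕ × ℕ).2)
              = (π x1 : ℕ) + 1 := valOf_two _ _
          rw [e1] at h1
          rw [e2] at h2
          rw [e3] at h3
          exact hnz z (Fin.lt_def.mpr (by omega)) (Fin.lt_def.mpr (by omega))
            (Fin.lt_def.mpr (by omega))
        · rintro ⟨h1, h2, h3, h4⟩
          have e3 : valOf (1 : Equiv.Perm (Fin 2)) ![x0, x1] π (((2,1) : ℕ × ℕ).2)
              = (π x0 : ℕ) + 1 := valOf_one _ _
          have e4 : valOf (1 : Equiv.Perm (Fin 2)) ![x0, x1] π (((2,1) : ℕ × ℕ).2 + 1)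
              = (π x1 : ℕ) + 1 := valOf_two _ _
          rw [e3] at h3
          rw [e4] at h4
          omega
  rw [hocc]
  constructor
  · intro h j0 j1 hlt hval
    by_contra hcon
    push_neg at hcon
    exact h ⟨j0, j1, hlt, hval, fun z hz0 hz1 => not_lt.mpr (hcon z hz0 hz1)⟩
  · intro h
    rintro ⟨x0, x1, hlt, hval, hnz⟩
    obtain ⟨z, hz0, hz1, hgt⟩ := h x0 x1 hlt hval
    exact hnz z hz0 hz1 hgt

end MeshChar

lemma card_sigma' {ι : Type*} [Fintype ι] (f : ι → Type*) [∀ i, Fintype (f i)] :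
    Nat.card (Σ i, f i) = ∑ i, Nat.card (f i) := by
  simp [Nat.card_eq_fintype_card]

lemma sum_ite_card {α : Type*} [Fintype α] (P : α → Prop) [DecidablePred P] (c : ℕ) :
    ∑ a : α, (if P a then c else 0) = c * Nat.card {a // P a} := by
  rw [Nat.card_eq_fintype_card, Fintype.card_subtype, ← Finset.sum_filter, Finset.sum_const,
    smul_eq_mul, mul_comm]

open scoped Classical in
lemma fiberG {m : ℕ} (σ : Equiv.Perm (Fin m)) (k : ℕ) :
    Nat.card {p : Fin (m+1) // descents σ + typ σ (p : ℕ) = k} =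
    (if descents σ = k then k + 1 else 0) + (if descents σ + 1 = k then m + 1 - k else 0) := by
  classical
  rw [Nat.card_eq_fintype_card, Fintype.card_subtype]
  by_cases h1 : descents σ = k
  · rw [if_pos h1, if_neg (by omega)]
    have hfe : ((Finset.univ : Finset (Fin (m+1))).filter
          fun p : Fin (m+1) => descents σ + typ σ (p : ℕ) = k)
        = (Finset.univ : Finset (Fin (m+1))).filter fun p : Fin (m+1) => typ σ (p : ℕ) = 0 := by
      apply Finset.filter_congr
      intro p _
      have := typ_le_one σ (p : ℕ)
      constructor
      · intro h; omega
      · intro h; omega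
    rw [hfe, card_typ0]
    omega
  · by_cases h2 : descents σ + 1 = k
    · rw [if_neg h1, if_pos h2]
      have hfe : ((Finset.univ : Finset (Fin (m+1))).filter
            fun p : Fin (m+1) => descents σ + typ σ (p : ℕ) = k)
          = (Finset.univ : Finset (Fin (m+1))).filter fun p : Fin (m+1) => typ σ (p : ℕ) = 1 := by
        apply Finset.filter_congr
        intro p _
        have := typ_le_one σ (p : ℕ)
        constructor
        · intro h; omega
        · intro h; omega
      rw [hfe, card_typ1]
      omega
    · rw [if_neg h1, if_neg h2]
      have hfe : ((Finset.univ : Finset (Fin (m+1))).filter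
            fun p : Fin (m+1) => descents σ + typ σ (p : ℕ) = k) = ∅ :=
        Finset.filter_eq_empty_iff.mpr (fun p _ => by
          have := typ_le_one σ (p : ℕ); omega)
      rw [hfe]
      simp

open scoped Classical in
lemma fiberF (σ : Equiv.Perm (Fin (n+1))) (k : ℕ) :
    Nat.card {p : Fin (n+2) // (Chara σ ∧ p ≠ bad σ) ∧ descents σ + typ σ (p : ℕ) = k} =
    (if Chara σ ∧ descents σ = k then k else 0) +
    (if Chara σ ∧ descents σ + 1 = k then n + 2 - k else 0) := by
  classical
  by_cases hc : Chara σ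
  · rw [Nat.card_eq_fintype_card, Fintype.card_subtype]
    by_cases h1 : descents σ = k
    · rw [if_pos ⟨hc, h1⟩, if_neg (fun hx => absurd hx.2 (by omega))]
      have hfe : ((Finset.univ : Finset (Fin (n+2))).filter
            fun p : Fin (n+2) => (Chara σ ∧ p ≠ bad σ) ∧ descents σ + typ σ (p : ℕ) = k)
          = ((Finset.univ : Finset (Fin (n+2))).filter
            fun p : Fin (n+2) => typ σ (p : ℕ) = 0).erase (bad σ) := by
        ext p
        simp only [Finset.mem_filter, Finset.mem_erase, Finset.mem_univ, true_and]
        have := typ_le_one σ (p : ℕ)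
        constructor
        · rintro ⟨⟨_, hne⟩, hk⟩
          exact ⟨hne, by omega⟩
        · rintro ⟨hne, h0⟩
          exact ⟨⟨hc, hne⟩, by omega⟩
      have hmem : bad σ ∈ (Finset.univ : Finset (Fin (n+2))).filter
          (fun p : Fin (n+2) => typ σ (p : ℕ) = 0) :=
        Finset.mem_filter.mpr ⟨Finset.mem_univ _, typ_bad σ⟩
      rw [hfe, Finset.card_erase_of_mem hmem, card_typ0]
      omega
    · by_cases h2 : descents σ + 1 = k
      · rw [if_neg (fun hx => h1 hx.2), if_pos ⟨hc, h2⟩]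
        have hfe : ((Finset.univ : Finset (Fin (n+2))).filter
              fun p : Fin (n+2) => (Chara σ ∧ p ≠ bad σ) ∧ descents σ + typ σ (p : ℕ) = k)
            = (Finset.univ : Finset (Fin (n+2))).filter
              fun p : Fin (n+2) => typ σ (p : ℕ) = 1 := by
          ext p
          simp only [Finset.mem_filter, Finset.mem_univ, true_and]
          have := typ_le_one σ (p : ℕ)
          constructor
          · rintro ⟨⟨_, _⟩, hk⟩
            omega
          · intro ht1
            refine ⟨⟨hc, ?_⟩, by omega⟩
            intro hbe
            rw [hbe] at ht1
            have := typ_bad σ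
            omega
        rw [hfe, card_typ1]
        omega
      · rw [if_neg (fun hx => h1 hx.2), if_neg (fun hx => h2 hx.2)]
        have hfe : ((Finset.univ : Finset (Fin (n+2))).filter
              fun p : Fin (n+2) => (Chara σ ∧ p ≠ bad σ) ∧ descents σ + typ σ (p : ℕ) = k) = ∅ :=
          Finset.filter_eq_empty_iff.mpr (fun p _ => by
            rintro ⟨-, hk⟩
            have := typ_le_one σ (p : ℕ)
            omega)
        rw [hfe]
        simp
  · haveI : IsEmpty {p : Fin (n+2) // (Chara σ ∧ p ≠ bad σ) ∧ descents σ + typ σ (p : ℕ) = k} :=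
      ⟨fun x => hc x.2.1.1⟩
    rw [Nat.card_of_isEmpty, if_neg (fun hx => hc hx.1), if_neg (fun hx => hc hx.1)]

open scoped Classical in
lemma fiberH (σ : Equiv.Perm (Fin (n+1))) :
    Nat.card {p : Fin (n+2) // Chara σ ∧ p ≠ bad σ} = if Chara σ then n + 1 else 0 := by
  classical
  by_cases hc : Chara σ
  · rw [if_pos hc, Nat.card_eq_fintype_card, Fintype.card_subtype]
    have hfe : ((Finset.univ : Finset (Fin (n+2))).filter
          fun p : Fin (n+2) => Chara σ ∧ p ≠ bad σ)
        = (Finset.univ : Finset (Fin (n+2))).erase (bad σ) := by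
      ext p
      simp [Finset.mem_erase, hc]
    rw [hfe, Finset.card_erase_of_mem (Finset.mem_univ _)]
    simp
  · haveI : IsEmpty {p : Fin (n+2) // Chara σ ∧ p ≠ bad σ} := ⟨fun x => hc x.2.1⟩
    rw [if_neg hc, Nat.card_of_isEmpty]

lemma recF (n k : ℕ) :
    Nat.card {π : Equiv.Perm (Fin (n+2)) // Chara π ∧ descents π = k} =
      k * Nat.card {σ : Equiv.Perm (Fin (n+1)) // Chara σ ∧ descents σ = k} +
      (n + 2 - k) * Nat.card {σ : Equiv.Perm (Fin (n+1)) // Chara σ ∧ descents σ + 1 = k} := by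
  classical
  have e1 : Nat.card {π : Equiv.Perm (Fin (n+2)) // Chara π ∧ descents π = k}
      = Nat.card {sp : Equiv.Perm (Fin (n+1)) × Fin (n+2) //
          Chara (ins sp.1 sp.2) ∧ descents (ins sp.1 sp.2) = k} :=
    (Nat.card_congr (Equiv.subtypeEquiv insEquiv (fun sp => Iff.rfl))).symm
  have e2 : ∀ sp : Equiv.Perm (Fin (n+1)) × Fin (n+2),
      (Chara (ins sp.1 sp.2) ∧ descents (ins sp.1 sp.2) = k) ↔
      ((Chara sp.1 ∧ sp.2 ≠ bad sp.1) ∧ descents sp.1 + typ sp.1 ((sp.2 : Fin (n+2)) : ℕ) = k) := by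
    intro sp
    rw [chara_ins_iff, descents_ins]
  have e3 := Nat.card_congr (Equiv.subtypeEquivRight e2)
  have e4 := Nat.card_congr (Equiv.subtypeProdEquivSigmaSubtype
    (fun (σ : Equiv.Perm (Fin (n+1))) (p : Fin (n+2)) =>
      (Chara σ ∧ p ≠ bad σ) ∧ descents σ + typ σ (p : ℕ) = k))
  rw [e1, e3, e4, card_sigma']
  rw [Finset.sum_congr rfl (fun σ _ => fiberF σ k), Finset.sum_add_distrib,
    sum_ite_card, sum_ite_card]

lemma recG (m k : ℕ) :
    Nat.card {π : Equiv.Perm (Fin (m+1)) // descents π = k} =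
      (k + 1) * Nat.card {σ : Equiv.Perm (Fin m) // descents σ = k} +
      (m + 1 - k) * Nat.card {σ : Equiv.Perm (Fin m) // descents σ + 1 = k} := by
  classical
  have e1 : Nat.card {π : Equiv.Perm (Fin (m+1)) // descents π = k}
      = Nat.card {sp : Equiv.Perm (Fin m) × Fin (m+1) // descents (ins sp.1 sp.2) = k} :=
    (Nat.card_congr (Equiv.subtypeEquiv insEquiv (fun sp => Iff.rfl))).symm
  have e2 : ∀ sp : Equiv.Perm (Fin m) × Fin (m+1),
      descents (ins sp.1 sp.2) = k ↔ descents sp.1 + typ sp.1 ((sp.2 : Fin (m+1)) : ℕ) = k := by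
    intro sp
    rw [descents_ins]
  have e3 := Nat.card_congr (Equiv.subtypeEquivRight e2)
  have e4 := Nat.card_congr (Equiv.subtypeProdEquivSigmaSubtype
    (fun (σ : Equiv.Perm (Fin m)) (p : Fin (m+1)) => descents σ + typ σ (p : ℕ) = k))
  rw [e1, e3, e4, card_sigma']
  rw [Finset.sum_congr rfl (fun σ _ => fiberG σ k), Finset.sum_add_distrib,
    sum_ite_card, sum_ite_card]

lemma recH (n : ℕ) :
    Nat.card {π : Equiv.Perm (Fin (n+2)) // Chara π} =
      (n + 1) * Nat.card {σ : Equiv.Perm (Fin (n+1)) // Chara σ} := by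
  classical
  have e1 : Nat.card {π : Equiv.Perm (Fin (n+2)) // Chara π}
      = Nat.card {sp : Equiv.Perm (Fin (n+1)) × Fin (n+2) // Chara (ins sp.1 sp.2)} :=
    (Nat.card_congr (Equiv.subtypeEquiv insEquiv (fun sp => Iff.rfl))).symm
  have e2 : ∀ sp : Equiv.Perm (Fin (n+1)) × Fin (n+2),
      Chara (ins sp.1 sp.2) ↔ (Chara sp.1 ∧ sp.2 ≠ bad sp.1) := by
    intro sp
    rw [chara_ins_iff]
  have e3 := Nat.card_congr (Equiv.subtypeEquivRight e2)
  have e4 := Nat.card_congr (Equiv.subtypeProdEquivSigmaSubtype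
    (fun (σ : Equiv.Perm (Fin (n+1))) (p : Fin (n+2)) => Chara σ ∧ p ≠ bad σ))
  rw [e1, e3, e4, card_sigma']
  rw [Finset.sum_congr rfl (fun σ _ => fiberH σ), sum_ite_card]

lemma shift_count {m k : ℕ} (hk : 1 ≤ k) :
    Nat.card {σ : Equiv.Perm (Fin m) // descents σ + 1 = k}
      = Nat.card {σ : Equiv.Perm (Fin m) // descents σ = k - 1} :=
  Nat.card_congr (Equiv.subtypeEquivRight (fun σ => by omega))

lemma shift_countF {m k : ℕ} (hk : 1 ≤ k) :
    Nat.card {σ : Equiv.Perm (Fin m) // Chara σ ∧ descents σ + 1 = k}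
      = Nat.card {σ : Equiv.Perm (Fin m) // Chara σ ∧ descents σ = k - 1} :=
  Nat.card_congr (Equiv.subtypeEquivRight (fun σ => and_congr_right (fun _ => by omega)))

lemma zero_countF {m : ℕ} :
    Nat.card {σ : Equiv.Perm (Fin m) // Chara σ ∧ descents σ + 1 = 0} = 0 := by
  haveI : IsEmpty {σ : Equiv.Perm (Fin m) // Chara σ ∧ descents σ + 1 = 0} :=
    ⟨fun x => by have := x.2.2; omega⟩
  exact Nat.card_of_isEmpty

lemma zero_countG {m : ℕ} :
    Nat.card {σ : Equiv.Perm (Fin m) // descents σ + 1 = 0} = 0 := by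
  haveI : IsEmpty {σ : Equiv.Perm (Fin m) // descents σ + 1 = 0} :=
    ⟨fun x => by have := x.2; omega⟩
  exact Nat.card_of_isEmpty

lemma descents_one (σ : Equiv.Perm (Fin 1)) : descents σ = 0 := by
  rw [descents_eq_sum]
  simp

lemma chara_one (σ : Equiv.Perm (Fin 1)) : Chara σ := by
  intro x0 x1 hlt _
  exfalso
  have h0 := x0.isLt
  have h1 := x1.isLt
  rw [Fin.lt_def] at hlt
  omega

lemma cardPerm1 : Nat.card (Equiv.Perm (Fin 1)) = 1 := by
  haveI : Subsingleton (Fin 1) := ⟨fun a b => Fin.ext (by omega)⟩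
  haveI : Nonempty (Equiv.Perm (Fin 1)) := ⟨1⟩
  exact Nat.card_unique

lemma baseF (k : ℕ) :
    Nat.card {π : Equiv.Perm (Fin 1) // Chara π ∧ descents π = k}
      = if k = 0 then 1 else 0 := by
  by_cases hk : k = 0
  · rw [if_pos hk]
    rw [Nat.card_congr (Equiv.subtypeUnivEquiv
      (fun π => ⟨chara_one π, by rw [descents_one]; omega⟩))]
    exact cardPerm1
  · rw [if_neg hk]
    haveI : IsEmpty {π : Equiv.Perm (Fin 1) // Chara π ∧ descents π = k} :=
      ⟨fun x => hk (by have := x.2.2; rw [descents_one] at this; omega)⟩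
    exact Nat.card_of_isEmpty

lemma baseF' (k : ℕ) :
    Nat.card {σ : Equiv.Perm (Fin 1) // Chara σ ∧ descents σ + 1 = k}
      = if k = 1 then 1 else 0 := by
  by_cases hk : k = 1
  · rw [if_pos hk]
    rw [Nat.card_congr (Equiv.subtypeUnivEquiv
      (fun π => ⟨chara_one π, by rw [descents_one]; omega⟩))]
    exact cardPerm1
  · rw [if_neg hk]
    haveI : IsEmpty {σ : Equiv.Perm (Fin 1) // Chara σ ∧ descents σ + 1 = k} :=
      ⟨fun x => hk (by have := x.2.2; rw [descents_one] at this; omega)⟩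
    exact Nat.card_of_isEmpty

lemma baseG' (k : ℕ) :
    Nat.card {σ : Equiv.Perm (Fin 1) // descents σ + 1 = k} = if k = 1 then 1 else 0 := by
  by_cases hk : k = 1
  · rw [if_pos hk]
    rw [Nat.card_congr (Equiv.subtypeUnivEquiv
      (fun π => by rw [descents_one]; omega))]
    exact cardPerm1
  · rw [if_neg hk]
    haveI : IsEmpty {σ : Equiv.Perm (Fin 1) // descents σ + 1 = k} :=
      ⟨fun x => hk (by have := x.2; rw [descents_one] at this; omega)⟩
    exact Nat.card_of_isEmpty

lemma baseH : Nat.card {π : Equiv.Perm (Fin 1) // Chara π} = 1 := by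
  rw [Nat.card_congr (Equiv.subtypeUnivEquiv chara_one)]
  exact cardPerm1

lemma claimA (m : ℕ) : ∀ k : ℕ,
    Nat.card {π : Equiv.Perm (Fin (m+2)) // Chara π ∧ descents π = k}
      = Nat.card {σ : Equiv.Perm (Fin (m+1)) // descents σ + 1 = k} := by
  induction m with
  | zero =>
    intro k
    rw [recF 0 k, baseF k, baseF' k, baseG' k]
    rcases k with _ | _ | k2 <;> simp
  | succ m ih =>
    intro k
    rw [recF (m+1) k, ih k]
    rcases Nat.eq_zero_or_pos k with hk | hk
    · subst hk
      rw [zero_countF, zero_countG, zero_countG]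
      simp
    · have hk1 : 1 ≤ k := hk
      rw [shift_countF hk1, ih (k-1), shift_count (m := m+2) hk1, recG (m+1) (k-1),
        shift_count (m := m+1) hk1]
      have h1 : k - 1 + 1 = k := by omega
      have h2 : m + 1 + 1 - (k - 1) = m + 1 + 2 - k := by omega
      rw [h1, h2]

lemma claimH (m : ℕ) :
    Nat.card {π : Equiv.Perm (Fin (m+1)) // Chara π} = m.factorial := by
  induction m with
  | zero => exact baseH
  | succ m ih =>
    rw [recH m, ih, Nat.factorial_succ]

end Stmt6

/-- For `n ≥ 2` and every `k`, the number of permutations of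
length `n` avoiding `(12, {(0,1),(1,1),(1,2),(2,1)})` with exactly `k` descents equals the number of
permutations of length `n-1` with exactly `k-1` descents (stated as
`descents σ + 1 = k`, so that `k = 0` gives the empty count on both sides).
In particular the number of avoiders of length `n ≥ 1` is `(n-1)!`. -/
theorem stmt6 :
    (∀ n : ℕ, 2 ≤ n → ∀ k : ℕ,
      Nat.card {π : Equiv.Perm (Fin n) //
        MeshAvoids (1 : Equiv.Perm (Fin 2)) {(0,1),(1,1),(1,2),(2,1)} π ∧ descents π = k} =
      Nat.card {σ : Equiv.Perm (Fin (n - 1)) // descents σ + 1 = k}) ∧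
    ∀ n : ℕ, 1 ≤ n →
      Nat.card {π : Equiv.Perm (Fin n) //
        MeshAvoids (1 : Equiv.Perm (Fin 2)) {(0,1),(1,1),(1,2),(2,1)} π} = (n - 1).factorial := by
  constructor
  · intro n hn k
    obtain ⟨m, rfl⟩ : ∃ m, n = m + 2 := ⟨n - 2, by omega⟩
    have hL : Nat.card {π : Equiv.Perm (Fin (m+2)) //
          MeshAvoids (1 : Equiv.Perm (Fin 2)) {(0,1),(1,1),(1,2),(2,1)} π ∧ descents π = k}
        = Nat.card {π : Equiv.Perm (Fin (m+2)) // Stmt6.Chara π ∧ descents π = k} :=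
      Nat.card_congr (Equiv.subtypeEquivRight
        (fun π => and_congr_left' (Stmt6.meshAvoids_iff π)))
    rw [hL, Stmt6.claimA m k]
    rfl
  · intro n hn
    obtain ⟨m, rfl⟩ : ∃ m, n = m + 1 := ⟨n - 1, by omega⟩
    have hL : Nat.card {π : Equiv.Perm (Fin (m+1)) //
          MeshAvoids (1 : Equiv.Perm (Fin 2)) {(0,1),(1,1),(1,2),(2,1)} π}
        = Nat.card {π : Equiv.Perm (Fin (m+1)) // Stmt6.Chara π} :=
      Nat.card_congr (Equiv.subtypeEquivRight (fun π => Stmt6.meshAvoids_iff π))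
    rw [hL, Stmt6.claimH m]
    rfl
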